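/- Let X_1, ..., X_k be independent geometric random variables on {1, 2, 3, ...} where X_i has success probability p_i ∈ (0,1], let X = Σ X_i, s = Σ 1/p_i², and p* = min_i p_i. Then for every λ ≥ 0, P(X ≥ E[X] + λ) ≤ exp(−(1/4)·min{λ²/s, λ·p*}). -/

import Mathlib

open MeasureTheory


lemma witt_tsum_pi_prod : ∀ (k : ℕ) (F : Fin k → ℕ → ENNReal),
    ∑' (n : Fin k → ℕ), ∏ i, F i (n i) = ∏ i, ∑' j, F i j := by
  intro k
  induction k with
  | zero =>
    intro F
    rw [tsum_eq_single (fun _ => 0) (fun b hb => absurd (Subsingleton.elim b _) hb)]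
    simp
  | succ k ih =>
    intro F
    rw [← Equiv.tsum_eq (Fin.consEquiv (fun _ => ℕ)) (fun n => ∏ i, F i (n i))]
    have h1 : ∀ (x : ℕ × (Fin k → ℕ)),
        (∏ i, F i ((Fin.consEquiv (fun _ => ℕ)) x i))
          = F 0 x.1 * ∏ i : Fin k, F i.succ (x.2 i) := by
      intro x
      rw [Fin.prod_univ_succ]
      simp [Fin.consEquiv]
    simp_rw [h1]
    rw [ENNReal.tsum_prod'
      (f := fun x : ℕ × (Fin k → ℕ) => F 0 x.1 * ∏ i : Fin k, F i.succ (x.2 i))]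
    calc ∑' (a : ℕ) (b : Fin k → ℕ), F 0 a * ∏ i : Fin k, F i.succ (b i)
        = ∑' (a : ℕ), F 0 a * ∑' (b : Fin k → ℕ), ∏ i : Fin k, F i.succ (b i) := by
          simp_rw [ENNReal.tsum_mul_left]
      _ = (∑' a, F 0 a) * ∑' (b : Fin k → ℕ), ∏ i : Fin k, F i.succ (b i) :=
          ENNReal.tsum_mul_right
      _ = ∏ i : Fin (k+1), ∑' j, F i j := by rw [ih (fun i => F i.succ), Fin.prod_univ_succ]



lemma witt_real_key (p h : ℝ) (hp0 : 0 < p) (hp1 : p ≤ 1) (hh0 : 0 ≤ h) (hhp : h ≤ p / 2) :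
    p * Real.exp h / (1 - (1 - p) * Real.exp h) ≤ Real.exp (h / p + h ^ 2 / p ^ 2) := by
  have heh : (0:ℝ) < Real.exp h := Real.exp_pos h
  have hexp : 1 - Real.exp (-h) ≤ h := by
    have := Real.add_one_le_exp (-h); linarith
  have hD2 : 0 < p - (1 - Real.exp (-h)) := by nlinarith
  have hM : p * Real.exp h / (1 - (1 - p) * Real.exp h)
      = p / (p - (1 - Real.exp (-h))) := by
    have hne : Real.exp (-h) = (Real.exp h)⁻¹ := by rw [Real.exp_neg]
    rw [hne]
    field_simp
    ring
  have hD : 0 < 1 - (1 - p) * Real.exp h := by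
    have hne : Real.exp (-h) = (Real.exp h)⁻¹ := by rw [Real.exp_neg]
    rw [hne] at hD2
    have := mul_pos hD2 heh
    have h1 : (Real.exp h)⁻¹ * Real.exp h = 1 := inv_mul_cancel₀ (ne_of_gt heh)
    nlinarith
  rw [hM]
  have step1 : p / (p - (1 - Real.exp (-h))) ≤ p / (p - h) := by
    apply div_le_div_of_nonneg_left hp0.le (by linarith) (by linarith)
  refine step1.trans ?_
  -- now p/(p-h) = 1/(1-a), a = h/p ≤ 1/2
  set a := h / p with ha
  have ha0 : 0 ≤ a := div_nonneg hh0 hp0.le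
  have ha2 : a ≤ 1/2 := by rw [ha, div_le_div_iff₀ hp0 (by norm_num)]; linarith
  have hpa : p / (p - h) = 1 / (1 - a) := by
    rw [ha]; field_simp
  rw [hpa]
  have hx : h ^ 2 / p ^ 2 = a ^ 2 := by rw [ha, div_pow]
  rw [hx]
  have hq := Real.quadratic_le_exp_of_nonneg (x := a + a ^ 2) (by positivity)
  rw [div_le_iff₀ (by linarith)]
  nlinarith [sq_nonneg a, sq_nonneg (a + a^2), Real.exp_pos (a + a^2)]

lemma witt_r_lt_one (p h : ℝ) (hp0 : 0 < p) (hp1 : p ≤ 1) (hh0 : 0 ≤ h) (hhp : h ≤ p / 2) :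
    (1 - p) * Real.exp h < 1 := by
  have h1 : (1 - p) ≤ Real.exp (-p) := by have := Real.add_one_le_exp (-p); linarith
  have h2 : Real.exp h ≤ Real.exp (p / 2) := Real.exp_le_exp.2 hhp
  have h3 : (1 - p) * Real.exp h ≤ Real.exp (-p) * Real.exp (p / 2) := by
    apply mul_le_mul h1 h2 (Real.exp_pos h).le (Real.exp_pos _).le
  rw [← Real.exp_add] at h3
  refine h3.trans_lt ?_
  rw [show -p + p/2 = -(p/2) by ring]
  calc Real.exp (-(p/2)) < Real.exp 0 := Real.exp_lt_exp.2 (by linarith)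
    _ = 1 := Real.exp_zero

lemma witt_mgf (p h : ℝ) (hp0 : 0 < p) (hp1 : p ≤ 1) (hh0 : 0 ≤ h) (hhp : h ≤ p / 2) :
    ∑' j : ℕ, (if j = 0 then 0 else
        ENNReal.ofReal ((1 - p) ^ (j - 1) * p * Real.exp (h * j)))
      ≤ ENNReal.ofReal (Real.exp (h / p + h ^ 2 / p ^ 2)) := by
  set r : ℝ := (1 - p) * Real.exp h with hr
  have hr0 : 0 ≤ r := mul_nonneg (by linarith) (Real.exp_pos h).le
  have hr1 : r < 1 := witt_r_lt_one p h hp0 hp1 hh0 hhp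
  set F : ℕ → ENNReal := fun j => if j = 0 then 0 else
      ENNReal.ofReal ((1 - p) ^ (j - 1) * p * Real.exp (h * j)) with hF
  have hshift : ∀ m : ℕ, F (m + 1) = ENNReal.ofReal (p * Real.exp h) * (ENNReal.ofReal r) ^ m := by
    intro m
    have : (1 - p) ^ (m + 1 - 1) * p * Real.exp (h * (m + 1 : ℕ))
        = (p * Real.exp h) * r ^ m := by
      push_cast
      rw [show h * (m + 1 : ℝ) = h * m + h by ring, Real.exp_add, hr, mul_pow,
        ← Real.exp_nat_mul]
      ring_nf
    simp only [hF, Nat.succ_ne_zero, if_false, this]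
    rw [ENNReal.ofReal_mul (by positivity), ENNReal.ofReal_pow hr0]
  have hsum : ∑' j, F j = ENNReal.ofReal (p * Real.exp h) * (1 - ENNReal.ofReal r)⁻¹ := by
    rw [tsum_eq_zero_add' ENNReal.summable]
    have hF0 : F 0 = 0 := by simp [hF]
    rw [hF0, zero_add]
    simp_rw [hshift]
    rw [ENNReal.tsum_mul_left, ENNReal.tsum_geometric]
  rw [hsum]
  have h1r : (1 : ENNReal) - ENNReal.ofReal r = ENNReal.ofReal (1 - r) := by
    rw [ENNReal.ofReal_sub 1 hr0, ENNReal.ofReal_one]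
  rw [h1r, ← ENNReal.ofReal_inv_of_pos (by linarith), ← ENNReal.ofReal_mul (by positivity)]
  apply ENNReal.ofReal_le_ofReal
  rw [← div_eq_mul_inv]
  exact witt_real_key p h hp0 hp1 hh0 hhp


/-- Theorem 1 of Witt (2014): concentration of sums of independent geometric random variables. -/
theorem stmt_15 {Ω : Type*} [MeasurableSpace Ω] (μ : Measure Ω) [IsProbabilityMeasure μ]
    (k : ℕ) (hk : 0 < k) (X : Fin k → Ω → ℕ) (p : Fin k → ℝ)
    (hp : ∀ i, p i ∈ Set.Ioc (0 : ℝ) 1)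
    (hind : ProbabilityTheory.iIndepFun X μ)
    (hgeom : ∀ i, ∀ j : ℕ, 1 ≤ j →
      μ {ω | X i ω = j} = ENNReal.ofReal ((1 - p i) ^ (j - 1) * p i))
    (hzero : ∀ i, μ {ω | X i ω = 0} = 0)
    (pstar : ℝ) (hpstar : IsLeast (Set.range p) pstar)
    (s : ℝ) (hs : s = ∑ i, 1 / (p i) ^ 2)
    (lam : ℝ) (hlam : 0 ≤ lam) :
    μ {ω | (∑ i, (X i ω : ℝ)) ≥ (∑ i, 1 / p i) + lam}
      ≤ ENNReal.ofReal (Real.exp (-(1 / 4) * min (lam ^ 2 / s) (lam * pstar))) := by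
  classical
  obtain ⟨⟨i0, hi0⟩, hlb⟩ := hpstar
  have hlb' : ∀ i, pstar ≤ p i := fun i => hlb ⟨i, rfl⟩
  have hps0 : 0 < pstar := hi0 ▸ (hp i0).1
  have hFinNe : Nonempty (Fin k) := ⟨⟨0, hk⟩⟩
  have hs0 : 0 < s := by
    rw [hs]
    apply Finset.sum_pos (fun i _ => by have := (hp i).1; positivity) Finset.univ_nonempty
  set E : ℝ := ∑ i, 1 / p i with hE
  set c : ℝ := E + lam with hc
  set t : ℝ := min (lam / (2 * s)) (pstar / 2) with ht
  have ht0 : 0 ≤ t := le_min (by positivity) (by positivity)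
  have htple : ∀ i, t ≤ p i / 2 := fun i =>
    (min_le_right _ _).trans (by have := hlb' i; linarith)
  -- per-value measures
  set g : Fin k → ℕ → ℝ := fun i j => if j = 0 then 0 else (1 - p i) ^ (j - 1) * p i with hg
  have hg0 : ∀ i j, 0 ≤ g i j := by
    intro i j
    rcases (hp i) with ⟨h1, h2⟩
    simp only [hg]
    split
    · exact le_rfl
    · exact mul_nonneg (pow_nonneg (by linarith) _) h1.le
  have hmeas : ∀ i (j : ℕ), μ (X i ⁻¹' {j}) = ENNReal.ofReal (g i j) := by
    intro i j
    have hset : X i ⁻¹' {j} = {ω | X i ω = j} := rfl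
    cases j with
    | zero => rw [hset, hzero i]; simp [hg]
    | succ m => rw [hset, hgeom i (m+1) (by omega)]; simp [hg]
  have hprodmeas : ∀ n : Fin k → ℕ,
      μ (⋂ i, X i ⁻¹' {n i}) = ∏ i, ENNReal.ofReal (g i (n i)) := by
    intro n
    have h1 := hind.measure_inter_preimage_eq_mul Finset.univ
      (sets := fun i => {n i}) (fun i _ => trivial)
    rw [show (⋂ i, X i ⁻¹' {n i}) = ⋂ i ∈ Finset.univ, X i ⁻¹' {n i} by simp, h1]
    exact Finset.prod_congr rfl fun i _ => hmeas i (n i)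
  -- step 1: union bound
  set T : Set (Fin k → ℕ) := {n | c ≤ ∑ i, (n i : ℝ)} with hT
  have key1 : μ {ω | (∑ i, (X i ω : ℝ)) ≥ c}
      ≤ ∑' (n : T), μ (⋂ i, X i ⁻¹' {(n : Fin k → ℕ) i}) := by
    refine le_trans (measure_mono ?_) (measure_iUnion_le _)
    intro ω hω
    exact Set.mem_iUnion.2 ⟨⟨fun i => X i ω, hω⟩, Set.mem_iInter.2 fun i => rfl⟩
  -- the tilted weights
  set G : Fin k → ℕ → ENNReal := fun i j => if j = 0 then 0 else
      ENNReal.ofReal ((1 - p i) ^ (j - 1) * p i * Real.exp (t * j)) with hG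
  -- pointwise bound on T
  have key2 : ∀ n : T, μ (⋂ i, X i ⁻¹' {(n : Fin k → ℕ) i})
      ≤ ENNReal.ofReal (Real.exp (-(t * c))) * ∏ i, G i ((n : Fin k → ℕ) i) := by
    rintro ⟨n, hn⟩
    rw [hprodmeas n]
    by_cases hex : ∃ i, n i = 0
    · obtain ⟨i, hi⟩ := hex
      rw [Finset.prod_eq_zero (Finset.mem_univ i) (by simp [hg, hi])]
      exact zero_le
    · push_neg at hex
      have hGn : ∀ i, G i (n i)
          = ENNReal.ofReal (g i (n i) * Real.exp (t * n i)) := by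
        intro i
        simp only [hG, hg, if_neg (hex i)]
      simp_rw [hGn]
      rw [← ENNReal.ofReal_prod_of_nonneg (fun i _ => hg0 i (n i)),
        ← ENNReal.ofReal_prod_of_nonneg (fun (i : Fin k) _ => by
          have := hg0 i (n i); positivity : ∀ i ∈ Finset.univ, 0 ≤ g i (n i) * Real.exp (t * (n i : ℝ))),
        ← ENNReal.ofReal_mul (Real.exp_pos _).le]
      apply ENNReal.ofReal_le_ofReal
      have hsplit : ∏ i, g i (n i) * Real.exp (t * n i)
          = (∏ i, g i (n i)) * Real.exp (t * ∑ i, (n i : ℝ)) := by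
        rw [Finset.prod_mul_distrib, ← Real.exp_sum, Finset.mul_sum]
      rw [hsplit, ← mul_assoc, mul_comm (Real.exp (-(t*c))), mul_assoc, ← Real.exp_add]
      have hone : (1:ℝ) ≤ Real.exp (-(t*c) + t * ∑ i, (n i : ℝ)) := by
        apply Real.one_le_exp
        have : c ≤ ∑ i, (n i : ℝ) := hn
        nlinarith
      nlinarith [Finset.prod_nonneg (fun i (_ : i ∈ Finset.univ) => hg0 i (n i)),
        Real.exp_pos (-(t*c) + t * ∑ i, (n i : ℝ))]
  -- sum over T, extend to all n, factorize
  have key3 : ∑' (n : T), μ (⋂ i, X i ⁻¹' {(n : Fin k → ℕ) i})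
      ≤ ENNReal.ofReal (Real.exp (-(t * c))) * ∏ i, ∑' j, G i j := by
    calc ∑' (n : T), μ (⋂ i, X i ⁻¹' {(n : Fin k → ℕ) i})
        ≤ ∑' (n : T), ENNReal.ofReal (Real.exp (-(t * c))) * ∏ i, G i ((n : Fin k → ℕ) i) :=
          ENNReal.tsum_le_tsum key2
      _ ≤ ∑' (n : Fin k → ℕ), ENNReal.ofReal (Real.exp (-(t * c))) * ∏ i, G i (n i) := by
          rw [tsum_subtype T (fun n => ENNReal.ofReal (Real.exp (-(t * c))) * ∏ i, G i (n i))]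
          exact ENNReal.tsum_le_tsum (fun n => Set.indicator_le_self _ _ n)
      _ = ENNReal.ofReal (Real.exp (-(t * c))) * ∑' (n : Fin k → ℕ), ∏ i, G i (n i) :=
          ENNReal.tsum_mul_left
      _ = ENNReal.ofReal (Real.exp (-(t * c))) * ∏ i, ∑' j, G i j := by
          rw [witt_tsum_pi_prod]
  -- mgf bound per coordinate
  have key4 : ∏ i, ∑' j, G i j
      ≤ ∏ i, ENNReal.ofReal (Real.exp (t / p i + t ^ 2 / p i ^ 2)) := by
    apply Finset.prod_le_prod'
    intro i _
    exact witt_mgf (p i) t (hp i).1 (hp i).2 ht0 (htple i)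
  -- combine
  have key5 : μ {ω | (∑ i, (X i ω : ℝ)) ≥ c}
      ≤ ENNReal.ofReal (Real.exp (-(t * c) + ∑ i, (t / p i + t ^ 2 / p i ^ 2))) := by
    refine key1.trans (key3.trans ?_)
    calc ENNReal.ofReal (Real.exp (-(t * c))) * ∏ i, ∑' j, G i j
        ≤ ENNReal.ofReal (Real.exp (-(t * c)))
            * ∏ i, ENNReal.ofReal (Real.exp (t / p i + t ^ 2 / p i ^ 2)) :=
          mul_le_mul_right key4 _
      _ = ENNReal.ofReal (Real.exp (-(t * c) + ∑ i, (t / p i + t ^ 2 / p i ^ 2))) := by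
          rw [← ENNReal.ofReal_prod_of_nonneg (fun i _ => (Real.exp_pos _).le),
            ← ENNReal.ofReal_mul (Real.exp_pos _).le, Real.exp_add, Real.exp_sum]
  refine key5.trans (ENNReal.ofReal_le_ofReal (Real.exp_le_exp.2 ?_))
  -- final arithmetic
  have hsum_split : ∑ i, (t / p i + t ^ 2 / p i ^ 2) = t * E + t ^ 2 * s := by
    rw [Finset.sum_add_distrib, hE, hs, Finset.mul_sum, Finset.mul_sum]
    congr 1
    · exact Finset.sum_congr rfl fun i _ => by rw [mul_one_div]
    · exact Finset.sum_congr rfl fun i _ => by rw [mul_one_div]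
  rw [hsum_split, hc]
  have hfinal : t ^ 2 * s - t * lam ≤ -(1 / 4) * min (lam ^ 2 / s) (lam * pstar) := by
    rcases le_total (lam / (2 * s)) (pstar / 2) with hcase | hcase
    · rw [ht, min_eq_left hcase]
      have h1 : (lam / (2 * s)) ^ 2 * s - (lam / (2 * s)) * lam = -(1/4) * (lam ^ 2 / s) := by
        field_simp
        ring
      rw [h1]
      have h2 : min (lam ^ 2 / s) (lam * pstar) ≤ lam ^ 2 / s := min_le_left _ _
      linarith
    · rw [ht, min_eq_right hcase]
      have hps : pstar * s ≤ lam := by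
        rw [div_le_div_iff₀ (by norm_num) (by linarith)] at hcase
        nlinarith
      have h2 : min (lam ^ 2 / s) (lam * pstar) ≤ lam * pstar := min_le_right _ _
      nlinarith
  linarith
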